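/- Let ABC be a nondegenerate triangle in the Euclidean plane, let A₁ be the point of the open segment BC with ∠BAA₁ = ∠A₁AC (foot of the internal bisector from A), and let B₁ be the point of the open segment AC with ∠ABB₁ = ∠B₁BC (foot of the internal bisector from B). Then the triangle is isosceles (dist C A = dist C B) if and only if the line through A₁ and B₁ is parallel to the line through A and B. (Proposition 3.12.) -/

import Mathlib

open EuclideanGeometry RealInnerProductSpace

section Aux

variable {E : Type*} [NormedAddCommGroup E] [InnerProductSpace ℝ E]

/-- Core computation: for `x = p • u + q • v` with `p, q > 0` and `u, v` not on a
common ray, `x` bisects the angle between `u` and `v` iff `p * ‖u‖ = q * ‖v‖`. -/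
lemma bisector_core (u v : E) (p q : ℝ) (hp : 0 < p) (hq : 0 < q)
    (hCS : ⟪u, v⟫ < ‖u‖ * ‖v‖) (hx : p • u + q • v ≠ 0) :
    InnerProductGeometry.angle u (p • u + q • v)
      = InnerProductGeometry.angle (p • u + q • v) v ↔ p * ‖u‖ = q * ‖v‖ := by
  have hu : u ≠ 0 := by
    rintro rfl; simp only [inner_zero_left, norm_zero, zero_mul] at hCS; exact lt_irrefl _ hCS
  have hv : v ≠ 0 := by
    rintro rfl; simp only [inner_zero_right, norm_zero, mul_zero] at hCS; exact lt_irrefl _ hCS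
  have hun : 0 < ‖u‖ := norm_pos_iff.2 hu
  have hvn : 0 < ‖v‖ := norm_pos_iff.2 hv
  have hxn : 0 < ‖p • u + q • v‖ := norm_pos_iff.2 hx
  rw [← Real.injOn_cos.eq_iff
      ⟨InnerProductGeometry.angle_nonneg _ _, InnerProductGeometry.angle_le_pi _ _⟩
      ⟨InnerProductGeometry.angle_nonneg _ _, InnerProductGeometry.angle_le_pi _ _⟩,
    InnerProductGeometry.cos_angle, InnerProductGeometry.cos_angle]
  have h1 : ⟪u, p • u + q • v⟫ = p * ‖u‖ ^ 2 + q * ⟪u, v⟫ := by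
    simp only [inner_add_right, real_inner_smul_right, real_inner_self_eq_norm_sq]
  have h2 : ⟪p • u + q • v, v⟫ = p * ⟪u, v⟫ + q * ‖v‖ ^ 2 := by
    simp only [inner_add_left, real_inner_smul_left, real_inner_self_eq_norm_sq,
      real_inner_comm u v]
  rw [h1, h2, div_eq_div_iff (by positivity) (by positivity)]
  constructor
  · intro h
    have h3 : (p * ‖u‖ - q * ‖v‖) * ((‖u‖ * ‖v‖ - ⟪u, v⟫) * ‖p • u + q • v‖) = 0 := by
      linear_combination h
    rcases mul_eq_zero.1 h3 with h4 | h4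
    · linarith
    · exact absurd h4 (mul_pos (by linarith) hxn).ne'
  · intro h
    linear_combination ((‖u‖ * ‖v‖ - ⟪u, v⟫) * ‖p • u + q • v‖) * h

end Aux

/-- Linear independence of edge vectors from affine independence. -/
lemma indep_helper {V : Type*} [AddCommGroup V] [Module ℝ V]
    (A B C : V) (h : AffineIndependent ℝ ![A, B, C]) :
    ∀ x y : ℝ, x • (B - A) + y • (C - A) = 0 → x = 0 ∧ y = 0 := by
  rw [affineIndependent_iff] at h
  intro x y hxy
  have hsum : (Finset.univ : Finset (Fin 3)).sum ![-(x + y), x, y] = 0 := by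
    simp [Fin.sum_univ_three]
  have hpt : ∑ e ∈ (Finset.univ : Finset (Fin 3)), (![-(x + y), x, y]) e • (![A, B, C]) e = 0 := by
    rw [Fin.sum_univ_three]
    simp only [Matrix.cons_val_zero, Matrix.cons_val_one, Matrix.head_cons]
    have h2 : (![-(x + y), x, y]) 2 • (![A, B, C]) 2 = y • C := by rfl
    rw [h2]
    have : -(x + y) • A + x • B + y • C = x • (B - A) + y • (C - A) := by module
    rw [this, hxy]
  have := h Finset.univ ![-(x + y), x, y] hsum hpt
  exact ⟨by simpa using this 1 (Finset.mem_univ _), by simpa using this 2 (Finset.mem_univ _)⟩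

/-- **Proposition 3.12.** In a nondegenerate triangle `ABC` with feet of the internal
bisectors `A₁ ∈ (B,C)` and `B₁ ∈ (A,C)`, the triangle is isosceles
(`dist C A = dist C B`) if and only if the line through `A₁` and `B₁` is parallel to
the line through `A` and `B` (their direction submodules coincide). -/
theorem isosceles_iff_bisector_feet_line_parallel
    (A B C A₁ B₁ : EuclideanSpace ℝ (Fin 2))
    (hABC : AffineIndependent ℝ ![A, B, C])
    (hA₁ : A₁ ∈ openSegment ℝ B C)
    (hbisA : ∠ B A A₁ = ∠ A₁ A C)
    (hB₁ : B₁ ∈ openSegment ℝ A C)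
    (hbisB : ∠ A B B₁ = ∠ B₁ B C) :
    dist C A = dist C B ↔
      (affineSpan ℝ {A₁, B₁}).direction = (affineSpan ℝ {A, B}).direction := by
  obtain ⟨p, q, hp, hq, hpq, hA⟩ := hA₁
  obtain ⟨p', q', hp', hq', hpq', hB⟩ := hB₁
  set w : EuclideanSpace ℝ (Fin 2) := B - A with hw
  set z : EuclideanSpace ℝ (Fin 2) := C - A with hz
  have hli : ∀ x y : ℝ, x • w + y • z = 0 → x = 0 ∧ y = 0 := indep_helper A B C hABC
  have hwne : w ≠ 0 := fun h => one_ne_zero (hli 1 0 (by simp [h])).1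
  have hzne : z ≠ 0 := fun h => one_ne_zero (hli 0 1 (by simp [h])).2
  have hwn : 0 < ‖w‖ := norm_pos_iff.2 hwne
  have hzn : 0 < ‖z‖ := norm_pos_iff.2 hzne
  have hABne : A - B ≠ 0 := by
    intro h; apply hwne; rw [hw]; rw [sub_eq_zero] at h ⊢; exact h.symm
  have hABn : 0 < ‖A - B‖ := norm_pos_iff.2 hABne
  -- strict Cauchy-Schwarz for the two vertex pairs
  have hCS1 : ⟪w, z⟫ < ‖w‖ * ‖z‖ := by
    rw [inner_lt_norm_mul_iff_real]
    intro h
    have h' : ‖z‖ • w + (-‖w‖) • z = 0 := by rw [neg_smul, h]; abel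
    exact hzn.ne' (hli _ _ h').1
  have hCS2 : ⟪A - B, C - B⟫ < ‖A - B‖ * ‖C - B‖ := by
    rw [inner_lt_norm_mul_iff_real]
    intro h
    have h' : (‖A - B‖ - ‖C - B‖) • w + (-‖A - B‖) • z = 0 := by
      rw [hw, hz]; linear_combination (norm := module) h
    have := (hli _ _ h').2
    exact hABn.ne' (by linarith [neg_eq_zero.1 this])
  -- foot of the bisector from A
  have hxA : A₁ - A = p • w + q • z := by rw [← hA, hw, hz]; linear_combination (norm := module) hpq • A
  have hxAne : p • w + q • z ≠ 0 := fun h => hp.ne' (hli p q h).1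
  have hbA : p * ‖w‖ = q * ‖z‖ := by
    apply (bisector_core w z p q hp hq hCS1 hxAne).1
    have e1 : ∠ B A A₁ = InnerProductGeometry.angle w (p • w + q • z) := by
      rw [EuclideanGeometry.angle, ← hxA, hw]; simp [vsub_eq_sub]
    have e2 : ∠ A₁ A C = InnerProductGeometry.angle (p • w + q • z) z := by
      rw [EuclideanGeometry.angle, ← hxA, hz]; simp [vsub_eq_sub]
    rw [← e1, ← e2]; exact hbisA
  -- foot of the bisector from B
  have hxB : B₁ - B = p' • (A - B) + q' • (C - B) := by rw [← hB]; linear_combination (norm := module) hpq' • B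
  have hxBne : p' • (A - B) + q' • (C - B) ≠ 0 := by
    intro h
    have h' : (-(p' + q')) • w + q' • z = 0 := by
      rw [hw, hz]; linear_combination (norm := module) h
    have := (hli _ _ h').1
    rw [hpq'] at this; norm_num at this
  have hbB : p' * ‖A - B‖ = q' * ‖C - B‖ := by
    apply (bisector_core (A - B) (C - B) p' q' hp' hq' hCS2 hxBne).1
    have e1 : ∠ A B B₁ = InnerProductGeometry.angle (A - B) (p' • (A - B) + q' • (C - B)) := by
      rw [EuclideanGeometry.angle, ← hxB]; simp [vsub_eq_sub]
    have e2 : ∠ B₁ B C = InnerProductGeometry.angle (p' • (A - B) + q' • (C - B)) (C - B) := by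
      rw [EuclideanGeometry.angle, ← hxB]; simp [vsub_eq_sub]
    rw [← e1, ← e2]; exact hbisB
  have hnAB : ‖A - B‖ = ‖w‖ := by rw [hw, norm_sub_rev]
  rw [hnAB] at hbB
  have hdCA : dist C A = ‖z‖ := by rw [dist_eq_norm, hz]
  have hdCB : dist C B = ‖C - B‖ := dist_eq_norm _ _
  -- rewrite the direction statement as a span statement
  rw [direction_affineSpan, direction_affineSpan,
    vectorSpan_pair, vectorSpan_pair]
  have hA₁B₁ : A₁ -ᵥ B₁ = p • w + (q - q') • z := by
    rw [vsub_eq_sub, ← hA, ← hB, hw, hz]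
    have h1 : p + q = p' + q' := by rw [hpq, hpq']
    linear_combination (norm := module) h1 • A
  have hABv : (A : EuclideanSpace ℝ (Fin 2)) -ᵥ B = (-1 : ℝ) • w := by
    rw [vsub_eq_sub, hw]; module
  rw [hA₁B₁, hABv, hdCA, hdCB]
  constructor
  · intro hiso
    have hfac : (q - q') * (‖w‖ + ‖z‖) = 0 := by
      linear_combination hbB - hbA - q' * hiso + ‖w‖ * hpq - ‖w‖ * hpq'
    have hqq : q = q' := by
      rcases mul_eq_zero.1 hfac with h | h
      · linarith
      · exact absurd h (add_pos hwn hzn).ne'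
    rw [hqq, sub_self, zero_smul, add_zero, Submodule.span_singleton_eq_span_singleton]
    refine ⟨Units.mk0 (-p⁻¹) (neg_ne_zero.2 (inv_ne_zero hp.ne')), ?_⟩
    rw [Units.smul_def, Units.val_mk0, smul_smul]
    congr 1
    field_simp
  · intro hspan
    have hmem : (p • w + (q - q') • z) ∈ (Submodule.span ℝ {(-1 : ℝ) • w}) := by
      rw [← hspan]; exact Submodule.mem_span_singleton_self _
    obtain ⟨r, hr⟩ := Submodule.mem_span_singleton.1 hmem
    have h0 : (p + r) • w + (q - q') • z = 0 := by
      linear_combination (norm := module) -hr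
    have hq0 : q = q' := by
      have := (hli _ _ h0).2; linarith
    have hfac2 : q * (‖z‖ - ‖C - B‖) = 0 := by
      linear_combination hbB - hbA + (-(‖C - B‖ + ‖w‖)) * hq0 + ‖w‖ * hpq - ‖w‖ * hpq'
    rcases mul_eq_zero.1 hfac2 with h | h
    · exact absurd h hq.ne'
    · linarith
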